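/- Let F be a field, let k ≥ 2 be an integer, and let ω ∈ F satisfy ω^k = 1 and ω ≠ 1. If t is a lower triangular n×n matrix over F whose diagonal entries all equal 2ω, then t is a sum of four (k+1)-potent n×n matrices over F. -/

import Mathlib

open Matrix

section Graded

variable {F : Type*} [Field F] {V : Type*} [AddCommGroup V] [Module F V]

/-- Kernel-flag construction: inside `ker (φ ^ h)` we can find a "bipartite"
decomposition `U ⊕ W` with `φ U ≤ W`, `φ W ≤ U`, containing a prescribed seed `T`. -/
lemma graded_decomp (φ : V →ₗ[F] V) :
    ∀ (h : ℕ) (T : Submodule F V), T ≤ LinearMap.ker (φ ^ h) →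
    (∀ x ∈ T, (φ ^ (h - 1)) x = 0 → x = 0) →
    ∃ U W : Submodule F V,
      U ⊔ W = LinearMap.ker (φ ^ h) ∧ (∀ x, x ∈ U → x ∈ W → x = 0) ∧
      T ≤ U ∧ (∀ x ∈ U, φ x ∈ W) ∧ (∀ x ∈ W, φ x ∈ U) := by
  intro h
  induction h with
  | zero =>
    intro T hTK _
    have hker : LinearMap.ker (φ ^ 0) = (⊥ : Submodule F V) := by
      ext x; simp [LinearMap.mem_ker, Module.End.one_apply]
    refine ⟨⊥, ⊥, by rw [hker]; simp, ?_, ?_, ?_, ?_⟩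
    · intro x hx _; simpa using hx
    · exact hker ▸ hTK
    · intro x hx; simp at hx; simp [hx]
    · intro x hx; simp at hx; simp [hx]
  | succ h ih =>
    intro T hTK hT
    set K := LinearMap.ker (φ ^ (h + 1)) with hKdef
    set K' := LinearMap.ker (φ ^ h) with hK'def
    have hK'K : K' ≤ K := by
      intro x hx
      rw [hK'def, LinearMap.mem_ker] at hx
      rw [hKdef, LinearMap.mem_ker, pow_succ', Module.End.mul_apply, hx, map_zero]
    obtain ⟨R, hR⟩ := Submodule.exists_isCompl (T ⊔ K')
    set S := T ⊔ (R ⊓ K) with hSdef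
    have hTS : T ≤ S := le_sup_left
    have hRKS : R ⊓ K ≤ S := le_sup_right
    have hSK : S ≤ K := sup_le hTK inf_le_right
    have hSdisj : ∀ x ∈ S, x ∈ K' → x = 0 := by
      intro x hxS hxK'
      obtain ⟨a, ha, b, hb, hab⟩ := Submodule.mem_sup.mp hxS
      have hbR : b ∈ R := hb.1
      have hbTK' : b ∈ T ⊔ K' := by
        have hbx : b = x - a := by rw [← hab]; abel
        rw [hbx]
        exact sub_mem ((le_sup_right : K' ≤ T ⊔ K') hxK') ((le_sup_left : T ≤ T ⊔ K') ha)
      have hb0 : b = 0 := by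
        have hd := hR.disjoint
        rw [disjoint_iff_inf_le] at hd
        simpa using hd ⟨hbTK', hbR⟩
      have hxa : x = a := by rw [← hab, hb0, add_zero]
      rw [hxa]
      exact hT a ha (by rw [← hxa]; simpa [hK'def] using hxK')
    have hSsup : S ⊔ K' = K := by
      apply le_antisymm (sup_le hSK hK'K)
      intro x hxK
      have hxtop : x ∈ (T ⊔ K') ⊔ R := by rw [hR.sup_eq_top]; trivial
      obtain ⟨y, hy, r, hrR, hyr⟩ := Submodule.mem_sup.mp hxtop
      obtain ⟨a, haT, b, hbK', hab⟩ := Submodule.mem_sup.mp hy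
      have hyK : y ∈ K := by
        rw [← hab]; exact add_mem (hTK haT) (hK'K hbK')
      have hrK : r ∈ K := by
        have hrx : r = x - y := by rw [← hyr]; abel
        rw [hrx]; exact sub_mem hxK hyK
      have hx' : x = (a + r) + b := by rw [← hyr, ← hab]; abel
      rw [hx']
      exact Submodule.add_mem_sup (add_mem (hTS haT) (hRKS ⟨hrR, hrK⟩)) hbK'
    -- seed for the recursive call
    set T' := Submodule.map φ S with hT'def
    have hT'K' : T' ≤ K' := by
      rintro _ ⟨s, hs, rfl⟩
      rw [hK'def, LinearMap.mem_ker, ← Module.End.mul_apply, ← pow_succ]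
      exact hSK hs
    have hT'disj : ∀ x ∈ T', (φ ^ (h - 1)) x = 0 → x = 0 := by
      rintro _ ⟨s, hs, rfl⟩ hx
      cases h with
      | zero =>
        simpa using hx
      | succ m =>
        have hsK' : s ∈ K' := by
          rw [hK'def, LinearMap.mem_ker, pow_succ, Module.End.mul_apply]
          simpa using hx
        rw [hSdisj s hs hsK', map_zero]
    obtain ⟨U', W', hsup', hdisj', hT'U', hU'W', hW'U'⟩ := ih T' hT'K' hT'disj
    have hU'K' : U' ≤ K' := by rw [← hsup']; exact le_sup_left
    have hW'K' : W' ≤ K' := by rw [← hsup']; exact le_sup_right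
    refine ⟨S ⊔ W', U', ?_, ?_, hTS.trans le_sup_left, ?_, ?_⟩
    · rw [sup_assoc, sup_comm W' U', hsup', hSsup]
    · intro x hxU hxW
      obtain ⟨s, hs, w, hw, hsw⟩ := Submodule.mem_sup.mp hxU
      have hsx : s = x - w := by rw [← hsw]; abel
      have hsK' : s ∈ K' := by
        rw [hsx]; exact sub_mem (hU'K' hxW) (hW'K' hw)
      have hs0 : s = 0 := hSdisj s hs hsK'
      have hxw : x = w := by rw [← hsw, hs0, zero_add]
      exact hdisj' x (hxw ▸ hxW) (hxw ▸ hw)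
    · intro x hx
      obtain ⟨s, hs, w, hw, hsw⟩ := Submodule.mem_sup.mp hx
      rw [← hsw, map_add]
      exact add_mem (hT'U' ⟨s, hs, rfl⟩) (hW'U' w hw)
    · intro x hx
      exact Submodule.mem_sup_right (hU'W' x hx)

/-- From a nilpotent endomorphism we get two idempotents summing to `1 + φ`. -/
lemma exists_idempotent_pair (φ : Module.End F V) (n : ℕ) (hφ : φ ^ n = 0) :
    ∃ e f : Module.End F V, e * e = e ∧ f * f = f ∧ e + f = 1 + φ := by
  obtain ⟨U, W, hsup, hdisj, -, hUW, hWU⟩ :=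
    graded_decomp φ n ⊥ bot_le (by intro x hx _; simpa using hx)
  have hker : LinearMap.ker (φ ^ n) = (⊤ : Submodule F V) := by
    rw [hφ]; exact LinearMap.ker_zero
  have hcompl : IsCompl U W := by
    constructor
    · rw [disjoint_iff_inf_le]
      intro x hx
      simpa using hdisj x hx.1 hx.2
    · rw [codisjoint_iff, hsup, hker]
  set p : Module.End F V := U.subtype ∘ₗ U.linearProjOfIsCompl W hcompl with hpdef
  have hpU : ∀ x, p x ∈ U := fun x => (U.linearProjOfIsCompl W hcompl x).2
  have hpu : ∀ x ∈ U, p x = x := by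
    intro x hx
    have := Submodule.linearProjOfIsCompl_apply_left hcompl ⟨x, hx⟩
    exact congrArg (Submodule.subtype U) this
  have hpw : ∀ x ∈ W, p x = 0 := by
    intro x hx
    have := Submodule.linearProjOfIsCompl_apply_right hcompl ⟨x, hx⟩
    exact (congrArg (Submodule.subtype U) this).trans (map_zero _)
  have hqW : ∀ x, x - p x ∈ W := by
    intro x
    have hx : x ∈ U ⊔ W := by rw [hsup, hker]; trivial
    obtain ⟨u, hu, w, hw, huw⟩ := Submodule.mem_sup.mp hx
    have : p x = u := by rw [← huw, map_add, hpu u hu, hpw w hw, add_zero]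
    rw [this, ← huw]
    simpa using hw
  have hp2 : p * p = p := by
    ext x; exact hpu _ (hpU x)
  have hpφp : p * φ * p = 0 := by
    ext x
    exact hpw _ (hUW _ (hpU x))
  have hqφq : (1 - p) * φ * (1 - p) = 0 := by
    ext x
    have h1 : φ (x - p x) ∈ U := hWU _ (hqW x)
    show (φ ((1 - p) x)) - p (φ ((1 - p) x)) = 0
    have h2 : (1 - p) x = x - p x := by simp [LinearMap.sub_apply]
    rw [h2, hpu _ h1, sub_self]
  have hq2 : (1 - p) * (1 - p) = 1 - p := by
    rw [sub_mul, mul_sub, mul_sub, mul_one, one_mul, hp2]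
    abel
  refine ⟨(1 + φ) * p, (1 + φ) * (1 - p), ?_, ?_, ?_⟩
  · have key : p * ((1 + φ) * p) = p := by
      rw [add_mul, one_mul, mul_add, ← mul_assoc p φ p, hp2, hpφp, add_zero]
    rw [mul_assoc, key]
  · have key : (1 - p) * ((1 + φ) * (1 - p)) = 1 - p := by
      rw [add_mul, one_mul, mul_add, ← mul_assoc (1 - p) φ (1 - p), hq2, hqφq, add_zero]
    rw [mul_assoc, key]
  · rw [← mul_add]; simp

end Graded

theorem lower_triangular_sum_four_kpotent {F : Type*} [Field F]
    (k n : ℕ) (hk : 2 ≤ k) (ω : F) (hω : ω ^ k = 1) (hω1 : ω ≠ 1)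
    (t : Matrix (Fin n) (Fin n) F)
    (hlt : ∀ i j : Fin n, i < j → t i j = 0)
    (hdiag : ∀ i : Fin n, t i i = 2 * ω) :
    ∃ E : Fin 4 → Matrix (Fin n) (Fin n) F,
      (∀ i, E i ^ (k + 1) = E i) ∧ t = ∑ i, E i := by
  have hω0 : ω ≠ 0 := by
    rintro rfl
    rw [zero_pow (by omega : k ≠ 0)] at hω
    exact zero_ne_one hω
  set M : Matrix (Fin n) (Fin n) F := ω⁻¹ • t - (2 : F) • 1 with hMdef
  have hMlow : ∀ i j : Fin n, (i : ℕ) ≤ (j : ℕ) → M i j = 0 := by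
    intro i j hij
    rcases eq_or_lt_of_le hij with heq | hlt'
    · have : i = j := Fin.ext heq
      subst this
      simp only [hMdef, Matrix.sub_apply, Matrix.smul_apply, Matrix.one_apply_eq,
        smul_eq_mul, hdiag i]
      rw [mul_comm (2 : F) ω, ← mul_assoc, inv_mul_cancel₀ hω0, one_mul, mul_one, sub_self]
    · have hij' : i < j := hlt'
      simp [hMdef, Matrix.sub_apply, Matrix.smul_apply, Matrix.one_apply,
        hlt i j hij', Fin.ne_of_lt hij']
  have hMpow : ∀ (m : ℕ) (i j : Fin n), (i : ℕ) < (j : ℕ) + m → (M ^ m) i j = 0 := by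
    intro m
    induction m with
    | zero =>
      intro i j hij
      rw [pow_zero, Matrix.one_apply_ne (by exact Fin.ne_of_lt hij)]
    | succ m ih =>
      intro i j hij
      rw [pow_succ, Matrix.mul_apply]
      apply Finset.sum_eq_zero
      intro l _
      rcases le_or_gt (l : ℕ) (j : ℕ) with hl | hl
      · rw [hMlow l j hl, mul_zero]
      · rw [ih i l (by omega), zero_mul]
  have hMn : M ^ n = 0 := by
    ext i j
    rw [hMpow n i j (by omega), Matrix.zero_apply]
  -- transfer to endomorphisms
  set Φ := Matrix.toLinAlgEquiv' (R := F) (n := Fin n) with hΦdef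
  have hφn : (Φ M) ^ n = 0 := by rw [← map_pow, hMn, map_zero]
  obtain ⟨e, f, he, hf, hef⟩ := exists_idempotent_pair (Φ M) n hφn
  set A := Φ.symm e with hAdef
  set B := Φ.symm f with hBdef
  have hA2 : A * A = A := by rw [hAdef, ← _root_.map_mul, he]
  have hB2 : B * B = B := by rw [hBdef, ← _root_.map_mul, hf]
  have hAB : A + B = 1 + M := by
    rw [hAdef, hBdef, ← _root_.map_add, hef, _root_.map_add, _root_.map_one, AlgEquiv.symm_apply_apply]
  have idem_pow : ∀ (X : Matrix (Fin n) (Fin n) F), X * X = X → ∀ m, X ^ (m + 1) = X := by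
    intro X hX m
    induction m with
    | zero => rw [pow_one]
    | succ m ih => rw [pow_succ, ih, hX]
  have hωk1 : ω ^ (k + 1) = ω := by rw [pow_succ, hω, one_mul]
  refine ⟨![ω • A, ω • B, ω • (1 : Matrix (Fin n) (Fin n) F), 0], ?_, ?_⟩
  · intro i
    fin_cases i
    · show (ω • A) ^ (k + 1) = ω • A
      rw [smul_pow, idem_pow A hA2 k, hωk1]
    · show (ω • B) ^ (k + 1) = ω • B
      rw [smul_pow, idem_pow B hB2 k, hωk1]
    · show (ω • (1 : Matrix (Fin n) (Fin n) F)) ^ (k + 1) = ω • 1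
      rw [smul_pow, one_pow, hωk1]
    · show (0 : Matrix (Fin n) (Fin n) F) ^ (k + 1) = 0
      rw [zero_pow (Nat.succ_ne_zero k)]
  · rw [Fin.sum_univ_four]
    show t = ω • A + ω • B + ω • (1 : Matrix (Fin n) (Fin n) F) + 0
    have hsum : ω • A + ω • B = ω • (1 + M) := by rw [← smul_add, hAB]
    have hωM : ω • M = t - (ω * 2) • (1 : Matrix (Fin n) (Fin n) F) := by
      rw [hMdef, smul_sub, smul_smul, mul_inv_cancel₀ hω0, one_smul, smul_smul]
    rw [add_zero, hsum, smul_add, hωM]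
    have h2 : (ω * 2) • (1 : Matrix (Fin n) (Fin n) F) = ω • 1 + ω • 1 := by
      rw [mul_two, add_smul]
    rw [h2]
    abel
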